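/- Let n₁, n₂, p, m be positive integers with n₁ + n₂ = p + m =: n. Let X₁ ∈ ℝ^{n₁×p} and X₂ ∈ ℝ^{n₂×p} be such that the Gram matrix XᵀX of the concatenated matrix X = (X₁ᵀ, X₂ᵀ)ᵀ is invertible. Let A₁ ∈ ℝ^{n₁×m} and A₂ ∈ ℝ^{n₂×m} satisfy A₁ᵀA₁ + A₂ᵀA₂ = I_m and A₁ᵀX₁ + A₂ᵀX₂ = 0. Then X₁ᵀA₁A₁ᵀX₁ = X₂ᵀA₂A₂ᵀX₂ = (X₁ᵀX₁)(XᵀX)⁻¹(X₂ᵀX₂). -/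

import Mathlib

open Matrix

/-- complementary sketching Gram matrix identity (Lemma on Gram of W). -/
theorem stmt_0 {n₁ n₂ p m : ℕ} (hn₁ : 0 < n₁) (hn₂ : 0 < n₂) (hp : 0 < p) (hm : 0 < m)
    (hdim : n₁ + n₂ = p + m)
    (X₁ : Matrix (Fin n₁) (Fin p) ℝ) (X₂ : Matrix (Fin n₂) (Fin p) ℝ)
    (A₁ : Matrix (Fin n₁) (Fin m) ℝ) (A₂ : Matrix (Fin n₂) (Fin m) ℝ)
    (hGram : IsUnit (X₁ᵀ * X₁ + X₂ᵀ * X₂))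
    (hA : A₁ᵀ * A₁ + A₂ᵀ * A₂ = 1)
    (hAX : A₁ᵀ * X₁ + A₂ᵀ * X₂ = 0) :
    X₁ᵀ * A₁ * A₁ᵀ * X₁ = X₂ᵀ * A₂ * A₂ᵀ * X₂ ∧
    X₁ᵀ * A₁ * A₁ᵀ * X₁ = (X₁ᵀ * X₁) * (X₁ᵀ * X₁ + X₂ᵀ * X₂)⁻¹ * (X₂ᵀ * X₂) := by
  set G : Matrix (Fin p) (Fin p) ℝ := X₁ᵀ * X₁ + X₂ᵀ * X₂ with hGdef
  have hGdet : IsUnit G.det := (Matrix.isUnit_iff_isUnit_det G).mp hGram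
  have hGinv : G⁻¹ * G = 1 := Matrix.nonsing_inv_mul G hGdet
  -- transposed orthogonality
  have hXA : X₁ᵀ * A₁ + X₂ᵀ * A₂ = 0 := by
    have := congrArg Matrix.transpose hAX
    simpa [Matrix.transpose_add, Matrix.transpose_mul] using this
  -- the big square matrices
  set C : Matrix (Fin n₁ ⊕ Fin n₂) (Fin m ⊕ Fin p) ℝ :=
    fromCols (fromRows A₁ A₂) (fromRows X₁ X₂) with hCdef
  set D : Matrix (Fin m ⊕ Fin p) (Fin n₁ ⊕ Fin n₂) ℝ :=
    fromRows (fromCols A₁ᵀ A₂ᵀ) (G⁻¹ * fromCols X₁ᵀ X₂ᵀ) with hDdef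
  have hDC : D * C = 1 := by
    rw [hDdef, hCdef, fromRows_mul_fromCols]
    rw [fromCols_mul_fromRows, fromCols_mul_fromRows,
      Matrix.mul_assoc, Matrix.mul_assoc, fromCols_mul_fromRows,
      fromCols_mul_fromRows, hA, hAX, hXA, ← hGdef]
    rw [hGinv]
    simp [Matrix.fromBlocks_one]
  have e : (Fin n₁ ⊕ Fin n₂) ≃ (Fin m ⊕ Fin p) := by
    apply Fintype.equivOfCardEq
    simp [Fintype.card_sum, hdim, Nat.add_comm]
  have hCD : C * D = 1 := (Matrix.mul_eq_one_comm_of_equiv e).mpr hDC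
  -- expand C * D into blocks
  have hblocks : fromBlocks (A₁ * A₁ᵀ + X₁ * G⁻¹ * X₁ᵀ) (A₁ * A₂ᵀ + X₁ * G⁻¹ * X₂ᵀ)
      (A₂ * A₁ᵀ + X₂ * G⁻¹ * X₁ᵀ) (A₂ * A₂ᵀ + X₂ * G⁻¹ * X₂ᵀ) = 1 := by
    rw [← hCD, hCdef, hDdef, fromCols_mul_fromRows, fromRows_mul_fromCols,
      ← Matrix.mul_assoc, fromRows_mul, fromRows_mul_fromCols, ← Matrix.fromBlocks_add]
  have h11 : A₁ * A₁ᵀ + X₁ * G⁻¹ * X₁ᵀ = 1 := by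
    ext i j
    have := congrFun (congrFun hblocks (Sum.inl i)) (Sum.inl j)
    simpa [Matrix.one_apply] using this
  -- hence A₁ * A₁ᵀ = 1 - X₁ * G⁻¹ * X₁ᵀ
  have hA11 : A₁ * A₁ᵀ = 1 - X₁ * G⁻¹ * X₁ᵀ := by
    rw [eq_sub_iff_add_eq, h11]
  have hkey : X₁ᵀ * A₁ * A₁ᵀ * X₁ = X₁ᵀ * X₁ - (X₁ᵀ * X₁) * G⁻¹ * (X₁ᵀ * X₁) := by
    calc X₁ᵀ * A₁ * A₁ᵀ * X₁ = X₁ᵀ * (A₁ * A₁ᵀ) * X₁ := by simp [Matrix.mul_assoc]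
      _ = X₁ᵀ * (1 - X₁ * G⁻¹ * X₁ᵀ) * X₁ := by rw [hA11]
      _ = X₁ᵀ * X₁ - (X₁ᵀ * X₁) * G⁻¹ * (X₁ᵀ * X₁) := by
          rw [Matrix.mul_sub, Matrix.sub_mul, Matrix.mul_one]
          simp [Matrix.mul_assoc]
  constructor
  · -- first conjunct from hAX
    have h1 : A₁ᵀ * X₁ = -(A₂ᵀ * X₂) := eq_neg_of_add_eq_zero_left hAX
    have h2 : X₁ᵀ * A₁ = -(X₂ᵀ * A₂) := by
      have := congrArg Matrix.transpose h1
      simpa [Matrix.transpose_mul, Matrix.transpose_neg] using this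
    calc X₁ᵀ * A₁ * A₁ᵀ * X₁ = (X₁ᵀ * A₁) * (A₁ᵀ * X₁) := by rw [Matrix.mul_assoc]
      _ = (-(X₂ᵀ * A₂)) * (-(A₂ᵀ * X₂)) := by rw [h1, h2]
      _ = (X₂ᵀ * A₂) * (A₂ᵀ * X₂) := by rw [Matrix.neg_mul, Matrix.mul_neg, neg_neg]
      _ = X₂ᵀ * A₂ * A₂ᵀ * X₂ := by simp [Matrix.mul_assoc]
  · -- second conjunct
    rw [hkey]
    have hS2 : X₂ᵀ * X₂ = G - X₁ᵀ * X₁ := by rw [hGdef]; abel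
    rw [hS2, Matrix.mul_sub, Matrix.mul_assoc (X₁ᵀ * X₁) G⁻¹ G, hGinv, Matrix.mul_one]
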